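/- For a symmetric concave function H : [0,∞)^p → ℝ invariant under coordinate permutations, the spectral function A ↦ H(λ(A)) is concave on the cone of p×p real symmetric positive semidefinite matrices, where λ(A) is the vector of eigenvalues of A. -/

import Mathlib

open Matrix Finset

lemma psd_diag_nonneg {p : ℕ} {M : Matrix (Fin p) (Fin p) ℝ} (hM : M.PosSemidef) (i : Fin p) :
    0 ≤ M i i := by simpa using hM.dotProduct_mulVec_nonneg (Pi.single i 1)

lemma psd_smul' {p : ℕ} {A : Matrix (Fin p) (Fin p) ℝ} (hA : A.PosSemidef) {a : ℝ} (ha : 0 ≤ a) :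
    (a • A).PosSemidef := by
  refine PosSemidef.of_dotProduct_mulVec_nonneg ?_ fun x => ?_
  · rw [Matrix.IsHermitian, conjTranspose_smul, hA.1.eq, star_trivial]
  · rw [smul_mulVec, dotProduct_smul]
    exact mul_nonneg ha (hA.dotProduct_mulVec_nonneg x)

lemma davis_key (p : ℕ) (H : (Fin p → ℝ) → ℝ)
    (hsym : ∀ (π : Equiv.Perm (Fin p)) (y : Fin p → ℝ), H (y ∘ π) = H y)
    (hconc : ConcaveOn ℝ {y : Fin p → ℝ | ∀ i, 0 ≤ y i} H)
    {A : Matrix (Fin p) (Fin p) ℝ} (hA : A.PosSemidef)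
    {U : Matrix (Fin p) (Fin p) ℝ} (hU : U ∈ Matrix.unitaryGroup (Fin p) ℝ) :
    H hA.1.eigenvalues ≤ H (fun i => (star U * A * U) i i) := by
  classical
  set ev := hA.1.eigenvalues with hev
  set V : Matrix (Fin p) (Fin p) ℝ := (hA.1.eigenvectorUnitary : Matrix (Fin p) (Fin p) ℝ) with hV
  have hV1 : star V * V = 1 := Unitary.coe_star_mul_self hA.1.eigenvectorUnitary
  have hV2 : V * star V = 1 := Unitary.coe_mul_star_self hA.1.eigenvectorUnitary
  have hU1 : star U * U = 1 := (Matrix.mem_unitaryGroup_iff'.mp hU)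
  have hU2 : U * star U = 1 := (Matrix.mem_unitaryGroup_iff.mp hU)
  set W : Matrix (Fin p) (Fin p) ℝ := star V * U with hWdef
  have hW1 : star W * W = 1 := by
    rw [hWdef, StarMul.star_mul, star_star, mul_assoc, ← mul_assoc V, hV2, one_mul, hU1]
  have hW2 : W * star W = 1 := by
    rw [hWdef, StarMul.star_mul, star_star, mul_assoc, ← mul_assoc U, hU2, one_mul, hV1]
  have spec : A = V * diagonal ev * star V := by
    simpa using hA.1.spectral_theorem
  have htrans : star U * A * U = star W * diagonal ev * W := by
    rw [spec]
    simp only [hWdef, StarMul.star_mul, star_star, mul_assoc]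
  set S : Matrix (Fin p) (Fin p) ℝ := Matrix.of (fun i j => W j i ^ 2) with hSdef
  have hrow : ∀ i, ∑ j, W j i ^ 2 = 1 := by
    intro i
    have h := congrArg (fun M : Matrix (Fin p) (Fin p) ℝ => M i i) hW1
    simpa [Matrix.mul_apply, sq] using h
  have hcol : ∀ j, ∑ i, W j i ^ 2 = 1 := by
    intro j
    have h := congrArg (fun M : Matrix (Fin p) (Fin p) ℝ => M j j) hW2
    simpa [Matrix.mul_apply, sq] using h
  have hS : S ∈ doublyStochastic ℝ (Fin p) := by
    rw [mem_doublyStochastic_iff_sum]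
    exact ⟨fun i j => sq_nonneg _, fun i => hrow i, fun j => hcol j⟩
  obtain ⟨w, hw0, hw1, hwS⟩ := exists_eq_sum_perm_of_mem_doublyStochastic hS
  have hSi : ∀ i j, S i j = ∑ σ : Equiv.Perm (Fin p), w σ * (if σ i = j then 1 else 0) := by
    intro i j
    rw [← hwS]
    simp only [Matrix.sum_apply, Matrix.smul_apply, smul_eq_mul]
    refine Finset.sum_congr rfl fun σ _ => ?_
    simp [Equiv.Perm.permMatrix, PEquiv.toMatrix_apply, Equiv.toPEquiv_apply, Option.mem_def]
  have hdi : (fun i => (star U * A * U) i i) = ∑ σ : Equiv.Perm (Fin p), w σ • (ev ∘ σ) := by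
    funext i
    have e1 : (star U * A * U) i i = ∑ j, S i j * ev j := by
      rw [htrans]
      simp only [Matrix.mul_apply, Matrix.diagonal_apply, Matrix.star_apply, star_trivial,
        hSdef, Matrix.of_apply, mul_ite, mul_zero, ite_mul, zero_mul,
        Finset.sum_ite_eq, Finset.sum_ite_eq', Finset.mem_univ, if_true]
      exact Finset.sum_congr rfl fun j _ => by ring
    have e2 : ∑ j, S i j * ev j = ∑ σ : Equiv.Perm (Fin p), w σ * ev (σ i) := by
      simp only [hSi, Finset.sum_mul]
      rw [Finset.sum_comm]
      refine Finset.sum_congr rfl fun σ _ => ?_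
      simp [mul_ite, ite_mul, Finset.sum_ite_eq]
    rw [e1, e2]
    simp [Finset.sum_apply, Function.comp]
  have hmem : ∀ σ : Equiv.Perm (Fin p), (ev ∘ σ) ∈ {y : Fin p → ℝ | ∀ i, 0 ≤ y i} :=
    fun σ i => hA.eigenvalues_nonneg (σ i)
  have jensen := hconc.le_map_sum (t := Finset.univ) (w := w) (p := fun σ => ev ∘ σ)
    (fun σ _ => hw0 σ) hw1 (fun σ _ => hmem σ)
  rw [hdi]
  calc H ev = ∑ σ : Equiv.Perm (Fin p), w σ • H (ev ∘ σ) := by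
        rw [Finset.sum_congr rfl fun σ _ => by rw [hsym σ ev]]
        rw [← Finset.sum_smul, hw1, one_smul]
    _ ≤ H (∑ σ : Equiv.Perm (Fin p), w σ • (ev ∘ σ)) := jensen

theorem davis_theorem (p : ℕ) (H : (Fin p → ℝ) → ℝ)
    (hsym : ∀ (π : Equiv.Perm (Fin p)) (y : Fin p → ℝ), H (y ∘ π) = H y)
    (hconc : ConcaveOn ℝ {y : Fin p → ℝ | ∀ i, 0 ≤ y i} H) :
    ConcaveOn ℝ {A : Matrix (Fin p) (Fin p) ℝ | A.PosSemidef}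
      (fun A => if h : A.IsHermitian then H h.eigenvalues else 0) := by
  constructor
  · intro A hA B hB a b ha hb hab
    exact (psd_smul' hA ha).add (psd_smul' hB hb)
  · intro A hA B hB a b ha hb hab
    simp only [Set.mem_setOf_eq] at hA hB
    have hC : (a • A + b • B).PosSemidef := (psd_smul' hA ha).add (psd_smul' hB hb)
    simp only [dif_pos hA.1, dif_pos hB.1, dif_pos hC.1]
    set U : Matrix (Fin p) (Fin p) ℝ := (hC.1.eigenvectorUnitary : Matrix (Fin p) (Fin p) ℝ)
      with hUdef
    have hU : U ∈ Matrix.unitaryGroup (Fin p) ℝ := hC.1.eigenvectorUnitary.2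
    have hdiag : hC.1.eigenvalues = fun i => (star U * (a • A + b • B) * U) i i := by
      have h : star U * (a • A + b • B) * U = diagonal (RCLike.ofReal ∘ hC.1.eigenvalues) := by
        simpa [Unitary.conjStarAlgAut_apply] using hC.1.conjStarAlgAut_star_eigenvectorUnitary
      funext i
      have h2 := congrArg (fun M : Matrix (Fin p) (Fin p) ℝ => M i i) h
      simpa [Matrix.diagonal_apply] using h2.symm
    have hsplit : (fun i => (star U * (a • A + b • B) * U) i i)
        = a • (fun i => (star U * A * U) i i) + b • (fun i => (star U * B * U) i i) := by
      funext i
      simp [Matrix.mul_add, Matrix.add_mul, Matrix.mul_smul, Matrix.smul_mul]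
    have hdA : (fun i => (star U * A * U) i i) ∈ {y : Fin p → ℝ | ∀ i, 0 ≤ y i} :=
      fun i => psd_diag_nonneg (hA.conjTranspose_mul_mul_same U) i
    have hdB : (fun i => (star U * B * U) i i) ∈ {y : Fin p → ℝ | ∀ i, 0 ≤ y i} :=
      fun i => psd_diag_nonneg (hB.conjTranspose_mul_mul_same U) i
    calc a • H hA.1.eigenvalues + b • H hB.1.eigenvalues
        ≤ a • H (fun i => (star U * A * U) i i) + b • H (fun i => (star U * B * U) i i) :=
          add_le_add (smul_le_smul_of_nonneg_left (davis_key p H hsym hconc hA hU) ha)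
            (smul_le_smul_of_nonneg_left (davis_key p H hsym hconc hB hU) hb)
      _ ≤ H (a • (fun i => (star U * A * U) i i) + b • (fun i => (star U * B * U) i i)) :=
          hconc.2 hdA hdB ha hb hab
      _ = H hC.1.eigenvalues := by rw [← hsplit, ← hdiag]
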